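/- arXiv:2501.11076 — 3 statements merged into one kernel-verified Lean document; each statement's English description precedes it below -/
import Mathlib

section
/- Let g : ℕ → ℝ be completely multiplicative with g(p) ∈ {−1, +1} for every prime p, and define f : ℕ → ℝ by f(n) = g(n) if n is squarefree and f(n) = 0 otherwise. Then for every real x ≥ 1, ∑_{n ≤ x} g(n) = √x · ∑_{a ≤ x} f(a)/√a − ∑_{a ≤ x} {√(x/a)} f(a), where {u} = u − ⌊u⌋ denotes the fractional part. -/
open Finset

/-- Uniqueness of the squarefree decomposition `n = a * b^2`. -/
lemma sq_decomp_unique {a₁ b₁ a₂ b₂ : ℕ} (ha₁ : Squarefree a₁) (ha₂ : Squarefree a₂)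
    (hb₁ : 0 < b₁) (hb₂ : 0 < b₂) (h : a₁ * b₁ ^ 2 = a₂ * b₂ ^ 2) : a₁ = a₂ ∧ b₁ = b₂ := by
  have key : ∀ a b : ℕ, Squarefree a → 0 < b → ∀ p : ℕ, p.Prime →
      (a * b ^ 2).factorization p % 2 = a.factorization p := by
    intro a b ha hb p hp
    rw [Nat.factorization_mul ha.ne_zero (pow_ne_zero _ hb.ne'), Nat.factorization_pow]
    have h1 := (Nat.squarefree_iff_factorization_le_one ha.ne_zero).mp ha p
    simp only [Finsupp.coe_add, Finsupp.coe_smul, Pi.add_apply, Pi.smul_apply, smul_eq_mul]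
    omega
  have haa : a₁ = a₂ := by
    apply Nat.factorization_inj ha₁.ne_zero ha₂.ne_zero
    ext p
    by_cases hp : p.Prime
    · rw [← key a₁ b₁ ha₁ hb₁ p hp, h, key a₂ b₂ ha₂ hb₂ p hp]
    · rw [Nat.factorization_eq_zero_of_not_prime _ hp, Nat.factorization_eq_zero_of_not_prime _ hp]
  refine ⟨haa, ?_⟩
  subst haa
  have hbb : b₁ ^ 2 = b₂ ^ 2 :=
    Nat.eq_of_mul_eq_mul_left (Nat.pos_of_ne_zero ha₁.ne_zero) h
  exact Nat.pow_left_injective (by norm_num) hbb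

/-- A completely multiplicative function taking values `±1` on primes takes values `±1`
on all positive integers. -/
lemma g_pm_one (g : ℕ → ℝ) (hg1 : g 1 = 1)
    (hgmul : ∀ m n : ℕ, 0 < m → 0 < n → g (m * n) = g m * g n)
    (hgp : ∀ p : ℕ, p.Prime → g p = 1 ∨ g p = -1) :
    ∀ b : ℕ, 0 < b → g b = 1 ∨ g b = -1 := by
  intro b
  induction b using Nat.strong_induction_on with
  | _ b ih =>
    intro hb
    rcases eq_or_lt_of_le (show 1 ≤ b from hb) with h1 | h1
    · left; rw [← h1]; exact hg1
    · have hp : b.minFac.Prime := Nat.minFac_prime (by omega)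
      obtain ⟨c, hc⟩ := Nat.minFac_dvd b
      have hc0 : 0 < c := by
        rcases Nat.eq_zero_or_pos c with h | h
        · subst h; simp at hc; omega
        · exact h
      have hclt : c < b := by
        have h2 := hp.two_le
        calc c = 1 * c := (one_mul c).symm
        _ < b.minFac * c := by exact Nat.mul_lt_mul_of_lt_of_le (by omega) le_rfl hc0
        _ = b := hc.symm
      have hrec := ih c hclt hc0
      have hgb : g b = g b.minFac * g c := by
        conv_lhs => rw [hc]
        exact hgmul _ _ hp.pos hc0
      rcases hgp _ hp with h | h <;> rcases hrec with h' | h' <;> simp [hgb, h, h']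

/-- For a completely multiplicative `g` taking values `±1` on primes, with `f` its
restriction to squarefree integers, one has
`∑_{n ≤ x} g(n) = √x ∑_{a ≤ x} f(a)/√a − ∑_{a ≤ x} {√(x/a)} f(a)`. -/
theorem unweighted_to_weighted_identity
    (g : ℕ → ℝ) (hg1 : g 1 = 1)
    (hgmul : ∀ m n : ℕ, 0 < m → 0 < n → g (m * n) = g m * g n)
    (hgp : ∀ p : ℕ, p.Prime → g p = 1 ∨ g p = -1)
    (f : ℕ → ℝ) (hfdef : ∀ n, f n = if Squarefree n then g n else 0)
    (x : ℝ) (hx : 1 ≤ x) :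
    ∑ n ∈ Finset.Icc 1 ⌊x⌋₊, g n =
      Real.sqrt x * ∑ a ∈ Finset.Icc 1 ⌊x⌋₊, f a / Real.sqrt a
        - ∑ a ∈ Finset.Icc 1 ⌊x⌋₊, Int.fract (Real.sqrt (x / (a : ℝ))) * f a := by
  have hx0 : (0 : ℝ) ≤ x := le_trans zero_le_one hx
  set N : ℕ := ⌊x⌋₊ with hNdef
  have hN1 : 1 ≤ N := Nat.le_floor (by exact_mod_cast hx)
  have hNle : (N : ℝ) ≤ x := Nat.floor_le hx0
  have hgsq : ∀ b : ℕ, 0 < b → g (b ^ 2) = 1 := by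
    intro b hb
    have h := hgmul b b hb hb
    rcases g_pm_one g hg1 hgmul hgp b hb with h' | h' <;>
      · rw [sq]; rw [h, h']; norm_num
  -- the set of pairs
  set P : Finset (ℕ × ℕ) :=
    ((Finset.Icc 1 N) ×ˢ (Finset.Icc 1 N)).filter
      (fun p => Squarefree p.1 ∧ p.1 * p.2 ^ 2 ≤ N) with hPdef
  -- decomposition functions
  obtain ⟨B, A, hBA, hA⟩ : ∃ B A : ℕ → ℕ, (∀ n, B n ^ 2 * A n = n) ∧ ∀ n, Squarefree (A n) := by
    have h := fun n : ℕ => Nat.sq_mul_squarefree n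
    choose A B h1 h2 using h
    exact ⟨B, A, h1, h2⟩
  -- Step 1: the sum over n equals the sum over pairs.
  have step1 : ∑ n ∈ Finset.Icc 1 N, g n = ∑ p ∈ P, f p.1 := by
    refine Finset.sum_nbij' (fun n => (A n, B n)) (fun p => p.1 * p.2 ^ 2) ?_ ?_ ?_ ?_ ?_
    · intro n hn
      simp only [Finset.mem_Icc] at hn
      have hn1 : 1 ≤ n := hn.1
      have hAB : A n * B n ^ 2 = n := by rw [mul_comm]; exact hBA n
      have hApos : 1 ≤ A n := Nat.pos_of_ne_zero (hA n).ne_zero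
      have hBpos : 1 ≤ B n := by
        rcases Nat.eq_zero_or_pos (B n) with h | h
        · exfalso; rw [h] at hAB; simp at hAB; omega
        · exact h
      have hAle : A n ≤ N := by
        calc A n ≤ A n * B n ^ 2 := Nat.le_mul_of_pos_right _ (by positivity)
        _ = n := hAB
        _ ≤ N := hn.2
      have hBle : B n ≤ N := by
        calc B n ≤ B n ^ 2 := Nat.le_self_pow (by norm_num) _
        _ ≤ A n * B n ^ 2 := Nat.le_mul_of_pos_left _ hApos
        _ = n := hAB
        _ ≤ N := hn.2
      simp only [hPdef, Finset.mem_filter, Finset.mem_product, Finset.mem_Icc]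
      exact ⟨⟨⟨hApos, hAle⟩, ⟨hBpos, hBle⟩⟩, hA n, by rw [hAB]; exact hn.2⟩
    · intro p hp
      simp only [hPdef, Finset.mem_filter, Finset.mem_product, Finset.mem_Icc] at hp
      simp only [Finset.mem_Icc]
      refine ⟨?_, hp.2.2⟩
      exact Nat.mul_pos hp.1.1.1 (pow_pos hp.1.2.1 2)
    · intro n hn
      show A n * B n ^ 2 = n
      rw [mul_comm]; exact hBA n
    · intro p hp
      simp only [hPdef, Finset.mem_filter, Finset.mem_product, Finset.mem_Icc] at hp
      set n := p.1 * p.2 ^ 2 with hn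
      have hAB : A n * B n ^ 2 = n := by rw [mul_comm]; exact hBA n
      have hn1 : 1 ≤ n := Nat.mul_pos hp.1.1.1 (pow_pos hp.1.2.1 2)
      have hBpos : 0 < B n := by
        rcases Nat.eq_zero_or_pos (B n) with h | h
        · exfalso; rw [h] at hAB; simp at hAB; omega
        · exact h
      have := sq_decomp_unique (hA n) hp.2.1 hBpos hp.1.2.1 (by rw [hAB])
      ext
      · exact this.1
      · exact this.2
    · intro n hn
      simp only [Finset.mem_Icc] at hn
      have hAB : A n * B n ^ 2 = n := by rw [mul_comm]; exact hBA n
      have hApos : 0 < A n := Nat.pos_of_ne_zero (hA n).ne_zero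
      have hBpos : 0 < B n := by
        rcases Nat.eq_zero_or_pos (B n) with h | h
        · exfalso; rw [h] at hAB; simp at hAB; omega
        · exact h
      have hgn : g n = g (A n) := by
        conv_lhs => rw [← hAB]
        rw [hgmul _ _ hApos (pow_pos hBpos 2), hgsq _ hBpos, mul_one]
      show g n = f (A n)
      rw [hgn, hfdef, if_pos (hA n)]
  -- Step 2: the sum over pairs equals a weighted sum with floor counts.
  have step2 : ∑ p ∈ P, f p.1
      = ∑ a ∈ Finset.Icc 1 N, (⌊Real.sqrt (x / (a : ℝ))⌋₊ : ℝ) * f a := by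
    rw [hPdef, Finset.sum_filter, Finset.sum_product]
    refine Finset.sum_congr rfl ?_
    intro a ha
    simp only [Finset.mem_Icc] at ha
    have ha1 : 1 ≤ a := ha.1
    have haR : (1 : ℝ) ≤ (a : ℝ) := by exact_mod_cast ha1
    have haR0 : (0 : ℝ) < (a : ℝ) := by linarith
    by_cases hsq : Squarefree a
    · -- count the b's
      have hcount : ∀ b ∈ Finset.Icc 1 N,
          (Squarefree a ∧ a * b ^ 2 ≤ N) ↔ b ∈ Finset.Icc 1 ⌊Real.sqrt (x / (a : ℝ))⌋₊ := by
        intro b hb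
        simp only [Finset.mem_Icc] at hb ⊢
        constructor
        · rintro ⟨-, h⟩
          refine ⟨hb.1, Nat.le_floor ?_⟩
          rw [Real.le_sqrt (by positivity) (by positivity), le_div_iff₀ haR0]
          have : ((a * b ^ 2 : ℕ) : ℝ) ≤ x := le_trans (by exact_mod_cast Nat.cast_le.mpr h) hNle
          push_cast at this
          nlinarith [this]
        · rintro ⟨hb1, hble⟩
          refine ⟨hsq, ?_⟩
          have hbR : (b : ℝ) ≤ Real.sqrt (x / (a : ℝ)) := by
            calc (b : ℝ) ≤ (⌊Real.sqrt (x / (a : ℝ))⌋₊ : ℝ) := by exact_mod_cast hble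
            _ ≤ Real.sqrt (x / (a : ℝ)) := Nat.floor_le (Real.sqrt_nonneg _)
          have hb2 : ((b : ℝ)) ^ 2 ≤ x / (a : ℝ) := by
            have := Real.sq_sqrt (by positivity : (0:ℝ) ≤ x / (a : ℝ))
            nlinarith [Real.sqrt_nonneg (x / (a : ℝ))]
          have : ((a * b ^ 2 : ℕ) : ℝ) ≤ x := by
            push_cast
            rw [← le_div_iff₀' haR0]
            exact hb2
          exact Nat.le_floor this
      have hcard : ∑ b ∈ Finset.Icc 1 N,
          (if Squarefree a ∧ a * b ^ 2 ≤ N then f a else 0)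
          = (⌊Real.sqrt (x / (a : ℝ))⌋₊ : ℝ) * f a := by
        have hMN : ⌊Real.sqrt (x / (a : ℝ))⌋₊ ≤ N := by
          apply Nat.floor_le_floor
          have h1 : x / (a : ℝ) ≤ x := div_le_self hx0 haR
          have h2 : Real.sqrt (x / (a : ℝ)) ≤ Real.sqrt x := Real.sqrt_le_sqrt h1
          have h3 : Real.sqrt x ≤ x := by
            rw [Real.sqrt_le_left hx0]
            nlinarith
          linarith
        rw [Finset.sum_congr rfl (fun b hb => by
          rw [if_congr (hcount b hb) rfl rfl]),
          ← Finset.sum_filter]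
        have : Finset.filter (fun b => b ∈ Finset.Icc 1 ⌊Real.sqrt (x / (a : ℝ))⌋₊)
            (Finset.Icc 1 N) = Finset.Icc 1 ⌊Real.sqrt (x / (a : ℝ))⌋₊ := by
          ext b
          simp only [Finset.mem_filter, Finset.mem_Icc]
          constructor
          · rintro ⟨-, h⟩; exact h
          · intro h
            exact ⟨⟨h.1, le_trans h.2 hMN⟩, h⟩
        rw [this, Finset.sum_const, Nat.card_Icc]
        simp [nsmul_eq_mul]
      exact hcard
    · -- a not squarefree: both sides vanish
      have hfa : f a = 0 := by rw [hfdef, if_neg hsq]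
      simp [hfa, hsq]
  -- Step 3: rewrite the right-hand side termwise.
  have step3 : Real.sqrt x * ∑ a ∈ Finset.Icc 1 N, f a / Real.sqrt a
        - ∑ a ∈ Finset.Icc 1 N, Int.fract (Real.sqrt (x / (a : ℝ))) * f a
      = ∑ a ∈ Finset.Icc 1 N, (⌊Real.sqrt (x / (a : ℝ))⌋₊ : ℝ) * f a := by
    rw [Finset.mul_sum, ← Finset.sum_sub_distrib]
    refine Finset.sum_congr rfl ?_
    intro a ha
    simp only [Finset.mem_Icc] at ha
    have haR0 : (0 : ℝ) < (a : ℝ) := by exact_mod_cast ha.1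
    have hdiv : Real.sqrt x / Real.sqrt (a : ℝ) = Real.sqrt (x / (a : ℝ)) :=
      (Real.sqrt_div hx0 _).symm
    have hfr : Int.fract (Real.sqrt (x / (a : ℝ)))
        = Real.sqrt (x / (a : ℝ)) - (⌊Real.sqrt (x / (a : ℝ))⌋₊ : ℝ) := by
      have h1 : Real.sqrt (x / (a : ℝ)) - Int.fract (Real.sqrt (x / (a : ℝ)))
          = (⌊Real.sqrt (x / (a : ℝ))⌋ : ℝ) := Int.self_sub_fract _
      have h2 : ((⌊Real.sqrt (x / (a : ℝ))⌋₊ : ℝ))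
          = ((⌊Real.sqrt (x / (a : ℝ))⌋ : ℤ) : ℝ) :=
        natCast_floor_eq_intCast_floor (Real.sqrt_nonneg _)
      rw [h2]
      linarith
    rw [hfr]
    have : Real.sqrt x * (f a / Real.sqrt (a : ℝ)) = Real.sqrt (x / (a : ℝ)) * f a := by
      rw [← hdiv]; ring
    rw [this]; ring
  rw [step1, step2, step3]
end

section
/- Let (f(p))_{p prime} be independent random variables each taking the values +1 and −1 with probability 1/2. There exists an absolute constant B > 0 such that for all sufficiently large real T, setting σ = log log T / log T, one has ℙ( ∑_{p ≤ T} 2 f(p) p^{−1/2−σ} > (log log T)^{0.99} ) ≤ exp( −(log log T)^{0.98}/8 + B (log log T)^{0.97} ), where the sum runs over primes p ≤ T. -/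
open MeasureTheory ProbabilityTheory Finset
open scoped ENNReal Classical

private 
lemma zeta_partial (s : ℝ) (hs : 1 < s) (n : ℕ) :
    ∑ i ∈ range n, (i : ℝ) ^ (-s) ≤ 1 + 1 / (s - 1) := by
  have h0 : ((0:ℕ):ℝ) ^ (-s) = 0 := by
    rw [Nat.cast_zero]; exact Real.zero_rpow (by linarith)
  have key : ∑ i ∈ range n, ((i + 2 : ℕ) : ℝ) ^ (-s) ≤ 1 / (s - 1) := by
    have hanti : AntitoneOn (fun x : ℝ => x ^ (-s)) (Set.Icc 1 (1 + (n:ℝ))) := by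
      intro x hx y hy hxy
      have hx1 : (0:ℝ) < x := lt_of_lt_of_le one_pos hx.1
      exact Real.rpow_le_rpow_of_nonpos hx1 hxy (by linarith)
    have h2 := hanti.sum_le_integral
    have hint : ∫ x in (1:ℝ)..(1 + (n:ℝ)), x ^ (-s) ≤ 1 / (s - 1) := by
      have hn0 : (0:ℝ) ≤ (n:ℝ) := Nat.cast_nonneg n
      rw [integral_rpow (Or.inr ⟨by intro h; rw [neg_eq_iff_eq_neg] at h; linarith, by
        rw [Set.uIcc_of_le (by linarith : (1:ℝ) ≤ 1 + (n:ℝ))]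
        intro h; exact absurd h.1 (by norm_num)⟩)]
      have hpow : (0:ℝ) ≤ (1 + (n:ℝ)) ^ (-s + 1) := Real.rpow_nonneg (by positivity) _
      have heq : ((1 + (n:ℝ)) ^ (-s + 1) - 1 ^ (-s + 1)) / (-s + 1)
          = (1 - (1 + (n:ℝ)) ^ (-s + 1)) / (s - 1) := by
        rw [Real.one_rpow]
        rw [div_eq_div_iff (by linarith) (by linarith)]; ring
      rw [heq]
      gcongr
      · linarith
    calc ∑ i ∈ range n, ((i + 2 : ℕ) : ℝ) ^ (-s)
        = ∑ i ∈ range n, ((1:ℝ) + ((i:ℕ) + 1 : ℕ)) ^ (-s) := by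
          apply Finset.sum_congr rfl; intro i _; congr 1; push_cast; ring
      _ ≤ ∫ x in (1:ℝ)..(1 + (n:ℝ)), x ^ (-s) := h2
      _ ≤ 1 / (s - 1) := hint
  calc ∑ i ∈ range n, (i : ℝ) ^ (-s)
      ≤ ∑ i ∈ range (2 + n), (i : ℝ) ^ (-s) := by
        apply Finset.sum_le_sum_of_subset_of_nonneg
        · exact Finset.range_subset_range.mpr (by omega)
        · intro i _ _; positivity
    _ = (∑ i ∈ range 2, (i : ℝ) ^ (-s)) + ∑ i ∈ range n, ((2 + i : ℕ) : ℝ) ^ (-s) := by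
        rw [Finset.sum_range_add]
    _ ≤ 1 + 1 / (s - 1) := by
        have : (∑ i ∈ range 2, (i : ℝ) ^ (-s)) = 1 := by
          rw [Finset.sum_range_succ, Finset.sum_range_one, h0]
          norm_num
        rw [this]
        gcongr
        calc ∑ i ∈ range n, ((2 + i : ℕ) : ℝ) ^ (-s)
            = ∑ i ∈ range n, ((i + 2 : ℕ) : ℝ) ^ (-s) := by
              apply Finset.sum_congr rfl; intro i _; rw [Nat.add_comm]
          _ ≤ 1 / (s - 1) := key

lemma zeta_tsum_le (s : ℝ) (hs : 1 < s) :
    ∑' n : ℕ, (n : ℝ) ^ (-s) ≤ 1 + 1 / (s - 1) :=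
  Summable.tsum_le_of_sum_range_le (Real.summable_nat_rpow.mpr (by linarith)) (fun n => zeta_partial s hs n)

private 
lemma prime_sum_le (s : ℝ) (hs : 1 < s) (N : ℕ) :
    ∑ p ∈ N.primesBelow, (p : ℝ) ^ (-s) ≤ Real.log (1 + 1 / (s - 1)) := by
  set F : ℕ →* ℝ :=
    { toFun := fun n => (n : ℝ) ^ (-s)
      map_one' := by simp
      map_mul' := fun m n => by
        push_cast
        exact Real.mul_rpow (Nat.cast_nonneg m) (Nat.cast_nonneg n) } with hF
  have hsum : Summable F := Real.summable_nat_rpow.mpr (by linarith)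
  have hlt : ∀ p ∈ N.primesBelow, (p : ℝ) ^ (-s) < 1 := by
    intro p hp
    exact Real.rpow_lt_one_of_one_lt_of_neg
      (by exact_mod_cast (Nat.prime_of_mem_primesBelow hp).one_lt) (by linarith)
  have hpos : ∀ p ∈ N.primesBelow, (0:ℝ) < (p : ℝ) ^ (-s) := by
    intro p hp
    exact Real.rpow_pos_of_pos (by exact_mod_cast (Nat.prime_of_mem_primesBelow hp).pos) _
  have step1 : ∑ p ∈ N.primesBelow, (p : ℝ) ^ (-s)
      ≤ ∑ p ∈ N.primesBelow, Real.log ((1 - (p:ℝ) ^ (-s))⁻¹) := by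
    apply Finset.sum_le_sum
    intro p hp
    have h1 : (0:ℝ) < 1 - (p:ℝ) ^ (-s) := by linarith [hlt p hp]
    have := Real.log_le_sub_one_of_pos h1
    rw [Real.log_inv]
    linarith
  have hppos : (0:ℝ) < ∏ p ∈ N.primesBelow, (1 - (p:ℝ) ^ (-s))⁻¹ := by
    apply Finset.prod_pos
    intro p hp
    have h1 : (0:ℝ) < 1 - (p:ℝ) ^ (-s) := by linarith [hlt p hp]
    positivity
  have step2 : ∑ p ∈ N.primesBelow, Real.log ((1 - (p:ℝ) ^ (-s))⁻¹)
      = Real.log (∏ p ∈ N.primesBelow, (1 - (p:ℝ) ^ (-s))⁻¹) := by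
    rw [Real.log_prod]
    intro p hp
    have h1 : (0:ℝ) < 1 - (p:ℝ) ^ (-s) := by linarith [hlt p hp]
    positivity
  have step3 : ∏ p ∈ N.primesBelow, (1 - (p:ℝ) ^ (-s))⁻¹ ≤ 1 + 1 / (s - 1) := by
    have heq := EulerProduct.prod_primesBelow_geometric_eq_tsum_smoothNumbers hsum N
    have : (∏ p ∈ N.primesBelow, (1 - F p)⁻¹) = ∏ p ∈ N.primesBelow, (1 - (p:ℝ) ^ (-s))⁻¹ := rfl
    rw [this] at heq
    rw [heq]
    calc ∑' m : N.smoothNumbers, F m ≤ ∑' n : ℕ, F n := by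
          apply Summable.tsum_subtype_le F _ (fun n => Real.rpow_nonneg (Nat.cast_nonneg n) _) hsum
      _ ≤ 1 + 1 / (s - 1) := zeta_tsum_le s hs
  calc ∑ p ∈ N.primesBelow, (p : ℝ) ^ (-s)
      ≤ Real.log (∏ p ∈ N.primesBelow, (1 - (p:ℝ) ^ (-s))⁻¹) := step1.trans step2.le
    _ ≤ Real.log (1 + 1 / (s - 1)) := Real.log_le_log hppos step3

/-- Independent Rademacher random variables indexed by the primes. -/
def IsRademacherSystem {Ω : Type*} [MeasurableSpace Ω] (μ : Measure Ω) (f : ℕ → Ω → ℝ) : Prop :=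
  (∀ p, Measurable (f p)) ∧
  iIndepFun (fun p : {p : ℕ // p.Prime} => f p.1) μ ∧
  (∀ p : ℕ, p.Prime → μ {ω | f p ω = 1} = 1/2 ∧ μ {ω | f p ω = -1} = 1/2)


private lemma rademacher_exp_integral {Ω : Type*} [MeasurableSpace Ω] {μ : Measure Ω}
    [IsProbabilityMeasure μ] {f : ℕ → Ω → ℝ} (hf : IsRademacherSystem μ f)
    {p : ℕ} (hp : p.Prime) (u : ℝ) :
    Integrable (fun ω => Real.exp (u * f p ω)) μ ∧
      ∫ ω, Real.exp (u * f p ω) ∂μ = Real.cosh u := by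
  obtain ⟨hmeas, _, hval⟩ := hf
  obtain ⟨hA, hB⟩ := hval p hp
  set A := {ω | f p ω = 1} with hAdef
  set B := {ω | f p ω = -1} with hBdef
  have hAm : MeasurableSet A := (hmeas p) (measurableSet_singleton 1)
  have hBm : MeasurableSet B := (hmeas p) (measurableSet_singleton (-1))
  have hdisj : Disjoint A B := by
    rw [Set.disjoint_left]
    intro ω h1 h2
    simp only [hAdef, hBdef, Set.mem_setOf_eq] at h1 h2
    rw [h1] at h2; norm_num at h2
  have hunion : μ (A ∪ B) = 1 := by
    rw [measure_union hdisj hBm, hA, hB]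
    rw [ENNReal.div_add_div_same]
    rw [one_add_one_eq_two]
    exact ENNReal.div_self two_ne_zero ENNReal.ofNat_ne_top
  have hae : ∀ᵐ ω ∂μ, ω ∈ A ∪ B := by
    rw [MeasureTheory.ae_iff]
    have : μ (A ∪ B)ᶜ = 1 - μ (A ∪ B) := by
      rw [measure_compl (hAm.union hBm) (measure_ne_top μ _), measure_univ]
    simp only [hunion] at this
    simp at this ⊢; exact this
  set h : Ω → ℝ := A.indicator (fun _ => Real.exp u) + B.indicator (fun _ => Real.exp (-u))
    with hhdef
  have haeeq : (fun ω => Real.exp (u * f p ω)) =ᵐ[μ] h := by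
    filter_upwards [hae] with ω hω
    rcases hω with h1 | h2
    · have hfω : f p ω = 1 := h1
      have hωB : ω ∉ B := by
        simp only [hBdef, Set.mem_setOf_eq, hfω]; norm_num
      simp [hhdef, Set.indicator_of_mem h1, Set.indicator_of_notMem hωB, hfω]
    · have hfω : f p ω = -1 := h2
      have hωA : ω ∉ A := by
        simp only [hAdef, Set.mem_setOf_eq, hfω]; norm_num
      simp [hhdef, Set.indicator_of_mem h2, Set.indicator_of_notMem hωA, hfω]
  have hint : Integrable h μ :=
    ((integrable_const _).indicator hAm).add ((integrable_const _).indicator hBm)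
  have hIg : Integrable (fun ω => Real.exp (u * f p ω)) μ := hint.congr haeeq.symm
  refine ⟨hIg, ?_⟩
  rw [integral_congr_ae haeeq]
  have htoReal : (μ A).toReal = 1/2 ∧ (μ B).toReal = 1/2 := by
    constructor <;> [rw [hA]; rw [hB]] <;> simp [ENNReal.toReal_div]
  rw [hhdef]
  simp only [Pi.add_apply]
  rw [integral_add ((integrable_const _).indicator hAm) ((integrable_const _).indicator hBm)]
  rw [integral_indicator_const _ hAm, integral_indicator_const _ hBm]
  rw [measureReal_def, measureReal_def, htoReal.1, htoReal.2, Real.cosh_eq]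
  simp only [smul_eq_mul]
  ring

/-- A Chernoff-type bound: for sufficiently large `T` and `σ = log log T / log T`,
`ℙ(∑_{p ≤ T} 2 f(p) p^{−1/2−σ} > (log log T)^{0.99})
  ≤ exp(−(log log T)^{0.98}/8 + B (log log T)^{0.97})`. -/
theorem chernoff_prime_sum_bound
    {Ω : Type*} [MeasurableSpace Ω] (μ : Measure Ω) [IsProbabilityMeasure μ]
    (f : ℕ → Ω → ℝ) (hf : IsRademacherSystem μ f) :
    ∃ B : ℝ, 0 < B ∧ ∃ T₀ : ℝ, ∀ T : ℝ, T₀ ≤ T →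
      μ {ω | Real.log (Real.log T) ^ ((0.99 : ℝ)) <
          ∑ p ∈ (Finset.Icc 1 ⌊T⌋₊).filter Nat.Prime,
            2 * f p ω * (p : ℝ) ^ (-(1 / 2 : ℝ) - Real.log (Real.log T) / Real.log T)} ≤
        ENNReal.ofReal (Real.exp (-(Real.log (Real.log T) ^ ((0.98 : ℝ))) / 8 +
          B * Real.log (Real.log T) ^ ((0.97 : ℝ)))) := by
  refine ⟨1, one_pos, Real.exp (Real.exp 4), fun T hT => ?_⟩
  -- basic quantities
  set ℓ := Real.log T with hℓdef
  set L := Real.log ℓ with hLdef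
  have hℓ5 : (5:ℝ) ≤ ℓ := by
    have h1 : Real.exp 4 ≤ ℓ := by
      rw [hℓdef, ← Real.log_exp (Real.exp 4)]
      exact Real.log_le_log (Real.exp_pos _) hT
    have : (5:ℝ) ≤ Real.exp 4 := by linarith [Real.add_one_le_exp (4:ℝ)]
    linarith
  have hℓ0 : (0:ℝ) < ℓ := by linarith
  have hL4 : (4:ℝ) ≤ L := by
    rw [hLdef, show (4:ℝ) = Real.log (Real.exp 4) from (Real.log_exp 4).symm]
    apply Real.log_le_log (Real.exp_pos _)
    rw [hℓdef, ← Real.log_exp (Real.exp 4)]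
    exact Real.log_le_log (Real.exp_pos _) hT
  have hL0 : (0:ℝ) < L := by linarith
  set σ := L / ℓ with hσdef
  have hσ0 : 0 < σ := div_pos hL0 hℓ0
  set sexp := 1 + 2 * σ with hsexpdef
  have hs1 : 1 < sexp := by simp [hsexpdef]; linarith
  -- the log bound
  have hlogV : Real.log (1 + 1 / (sexp - 1)) ≤ L := by
    have h1 : 1 / (sexp - 1) = ℓ / (2 * L) := by
      rw [hsexpdef, hσdef]; field_simp; ring
    rw [h1, hLdef]
    rw [Real.log_le_iff_le_exp (by positivity)]
    rw [Real.exp_log hℓ0]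
    have h2 : ℓ / (2 * L) ≤ ℓ / 2 := by
      apply div_le_div_of_nonneg_left hℓ0.le (by norm_num)
      · linarith
    linarith
  -- setup of random variables
  set c : ℕ → ℝ := fun p => 2 * (p : ℝ) ^ (-(1 / 2 : ℝ) - σ) with hcdef
  set X : {p : ℕ // p.Prime} → Ω → ℝ := fun q ω => c q.1 * f q.1 ω with hXdef
  have hXmeas : ∀ q, Measurable (X q) := fun q => (hf.1 q.1).const_mul _
  have hXindep : iIndepFun X μ := by
    have := hf.2.1.comp (fun q : {p : ℕ // p.Prime} => fun x : ℝ => c q.1 * x)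
      (fun q => measurable_id.const_mul _)
    exact this
  set s' : Finset {p : ℕ // p.Prime} := (Finset.Icc 1 ⌊T⌋₊).subtype Nat.Prime with hs'def
  set S : Ω → ℝ := ∑ q ∈ s', X q with hSdef
  set a := L ^ (0.99 : ℝ) with hadef
  set t := a / (4 * L) with htdef
  have ha0 : 0 < a := Real.rpow_pos_of_pos hL0 _
  have ht0 : 0 ≤ t := by positivity
  -- event rewriting
  have hevent : {ω | a < ∑ p ∈ (Finset.Icc 1 ⌊T⌋₊).filter Nat.Prime,
      2 * f p ω * (p : ℝ) ^ (-(1 / 2 : ℝ) - L / ℓ)} = {ω | a < S ω} := by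
    ext ω
    simp only [Set.mem_setOf_eq, hSdef, Finset.sum_apply]
    have h1 := Finset.sum_subtype_eq_sum_filter (s := Finset.Icc 1 ⌊T⌋₊)
      (fun p : ℕ => c p * f p ω) (p := Nat.Prime)
    have h2 : ∑ p ∈ (Finset.Icc 1 ⌊T⌋₊).filter Nat.Prime,
        2 * f p ω * (p : ℝ) ^ (-(1 / 2 : ℝ) - L / ℓ)
        = ∑ p ∈ (Finset.Icc 1 ⌊T⌋₊).filter (fun p => Nat.Prime p), c p * f p ω := by
      apply Finset.sum_congr rfl
      intro p _
      rw [hcdef]; ring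
    rw [h2, ← h1, hs'def]
  -- integrability
  have hint : ∀ q ∈ s', Integrable (fun ω => Real.exp (t * X q ω)) μ := by
    intro q _
    have := (rademacher_exp_integral hf q.2 (t * c q.1)).1
    simpa only [mul_assoc] using this
  have hSint : Integrable (fun ω => Real.exp (t * S ω)) μ :=
    hXindep.integrable_exp_mul_sum hXmeas hint
  -- mgf computation
  have hmgf_each : ∀ q : {p : ℕ // p.Prime}, mgf (X q) μ t = Real.cosh (t * c q.1) := by
    intro q
    rw [mgf]
    rw [← (rademacher_exp_integral hf q.2 (t * c q.1)).2]
    congr 1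
    ext ω
    rw [hXdef]; ring_nf
  have hmgf_sum : mgf S μ t ≤ Real.exp (t ^ 2 / 2 * ∑ q ∈ s', (c q.1) ^ 2) := by
    rw [hSdef, hXindep.mgf_sum hXmeas s']
    calc ∏ q ∈ s', mgf (X q) μ t
        ≤ ∏ q ∈ s', Real.exp ((t * c q.1) ^ 2 / 2) := by
          apply Finset.prod_le_prod
          · intro q _; rw [hmgf_each q]; positivity
          · intro q _; rw [hmgf_each q]; exact Real.cosh_le_exp_half_sq _
      _ = Real.exp (∑ q ∈ s', (t * c q.1) ^ 2 / 2) := by rw [Real.exp_sum]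
      _ = Real.exp (t ^ 2 / 2 * ∑ q ∈ s', (c q.1) ^ 2) := by
          congr 1
          rw [Finset.mul_sum]
          apply Finset.sum_congr rfl
          intro q _; ring
  -- variance bound
  have hVbound : ∑ q ∈ s', (c q.1) ^ 2 ≤ 4 * L := by
    have hterm : ∀ q : {p : ℕ // p.Prime}, (c q.1) ^ 2 = 4 * (q.1 : ℝ) ^ (-sexp) := by
      intro q
      have hq0 : (0:ℝ) < (q.1 : ℝ) := by exact_mod_cast q.2.pos
      rw [hcdef]
      have : ((q.1 : ℝ) ^ (-(1 / 2 : ℝ) - σ)) ^ 2 = (q.1 : ℝ) ^ (-sexp) := by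
        rw [← Real.rpow_natCast ((q.1 : ℝ) ^ (-(1 / 2 : ℝ) - σ)) 2, ← Real.rpow_mul hq0.le]
        congr 1
        rw [hsexpdef]; push_cast; ring
      rw [mul_pow, this]; norm_num
    calc ∑ q ∈ s', (c q.1) ^ 2 = 4 * ∑ q ∈ s', (q.1 : ℝ) ^ (-sexp) := by
          rw [Finset.mul_sum]; exact Finset.sum_congr rfl fun q _ => hterm q
      _ ≤ 4 * ∑ p ∈ (⌊T⌋₊ + 1).primesBelow, (p : ℝ) ^ (-sexp) := by
          gcongr 4 * ?_
          rw [hs'def, Finset.sum_subtype_eq_sum_filter (fun p : ℕ => (p:ℝ) ^ (-sexp))]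
          apply Finset.sum_le_sum_of_subset_of_nonneg
          · intro p hp
            simp only [Finset.mem_filter, Finset.mem_Icc] at hp
            exact Nat.mem_primesBelow.mpr ⟨by omega, hp.2⟩
          · intro p _ _; positivity
      _ ≤ 4 * Real.log (1 + 1 / (sexp - 1)) := by
          gcongr; exact prime_sum_le sexp hs1 _
      _ ≤ 4 * L := by gcongr
  -- Chernoff
  have hchern := measure_ge_le_exp_mul_mgf (μ := μ) (X := S) a ht0 hSint
  -- numeric bound on the exponent
  have hexp_bound : Real.exp (-t * a) * mgf S μ t ≤
      Real.exp (-(L ^ (0.98:ℝ)) / 8 + 1 * L ^ (0.97:ℝ)) := by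
    have hmgf0 : mgf S μ t ≤ Real.exp (t ^ 2 / 2 * (4 * L)) := by
      refine hmgf_sum.trans ?_
      apply Real.exp_le_exp.mpr
      have : (0:ℝ) ≤ t ^ 2 / 2 := by positivity
      nlinarith [hVbound]
    calc Real.exp (-t * a) * mgf S μ t ≤ Real.exp (-t * a) * Real.exp (t ^ 2 / 2 * (4 * L)) := by
          gcongr
      _ = Real.exp (-t * a + t ^ 2 / 2 * (4 * L)) := by rw [← Real.exp_add]
      _ ≤ Real.exp (-(L ^ (0.98:ℝ)) / 8 + 1 * L ^ (0.97:ℝ)) := by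
          apply Real.exp_le_exp.mpr
          have ha2 : a ^ 2 = L ^ (0.98:ℝ) * L := by
            rw [hadef, ← Real.rpow_natCast (L ^ (0.99:ℝ)) 2, ← Real.rpow_mul hL0.le]
            rw [show (L ^ (0.98:ℝ) * L) = L ^ (0.98:ℝ) * L ^ (1:ℝ) by rw [Real.rpow_one]]
            rw [← Real.rpow_add hL0]
            norm_num
          have hta : -t * a + t ^ 2 / 2 * (4 * L) = -(a ^ 2) / (8 * L) := by
            rw [htdef]; field_simp; ring
          rw [hta, ha2]
          have h097 : 0 ≤ L ^ (0.97:ℝ) := Real.rpow_nonneg hL0.le _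
          have : -(L ^ (0.98:ℝ) * L) / (8 * L) = -(L ^ (0.98:ℝ)) / 8 := by
            field_simp
          rw [this]
          linarith
  -- put it together
  rw [hevent]
  calc μ {ω | a < S ω} ≤ μ {ω | a ≤ S ω} := by
        exact measure_mono (fun ω (hω : a < S ω) => le_of_lt hω)
    _ = ENNReal.ofReal ((μ {ω | a ≤ S ω}).toReal) := by
        rw [ENNReal.ofReal_toReal (measure_ne_top μ _)]
    _ ≤ ENNReal.ofReal (Real.exp (-(L ^ (0.98:ℝ)) / 8 + 1 * L ^ (0.97:ℝ))) := by
        apply ENNReal.ofReal_le_ofReal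
        exact hchern.trans hexp_bound
end

section
/- Let (f(p))_{p prime} be independent random variables each taking the values +1 and −1 with probability 1/2. There exists an absolute constant C > 0 such that for every real t with 0 < |t| ≤ 1/10, setting z = exp(1/|t|), and for every real σ with −1/log(z) ≤ σ ≤ 1/log(z), one has E( ∏_{p ≤ z} | (1 + f(p) p^{−1/2−σ−it}) / (1 + f(p) p^{−1/2−σ}) |² ) ≤ C, where the product runs over primes p ≤ z. -/
open MeasureTheory ProbabilityTheory Finset
open scoped ENNReal Classical


lemma integral_finset_prod_of_iIndep {ι Ω : Type*} [MeasurableSpace Ω] (μ : Measure Ω)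
    [IsProbabilityMeasure μ] {g : ι → Ω → ℝ}
    (hind : iIndepFun g μ) (hmeas : ∀ i, Measurable (g i))
    (hnn : ∀ i ω, 0 ≤ g i ω) (s : Finset ι) :
    ∫ ω, ∏ i ∈ s, g i ω ∂μ = ∏ i ∈ s, ∫ ω, g i ω ∂μ := by
  classical
  induction s using Finset.cons_induction with
  | empty => simp
  | cons i s hi ih =>
    have hprodeq : (∏ j ∈ s, g j) = fun ω => ∏ j ∈ s, g j ω := by
      ext ω; simp
    have hindep : IndepFun (g i) (∏ j ∈ s, g j) μ :=
      (hind.indepFun_finsetProd_of_notMem hmeas hi).symm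
    have key : integral μ (g i * ∏ j ∈ s, g j)
        = integral μ (g i) * integral μ (∏ j ∈ s, g j) := by
      refine hindep.integral_mul_eq_mul_integral (hmeas i).aestronglyMeasurable ?_
      · rw [hprodeq]
        exact (Finset.measurable_prod s (fun j _ => hmeas j)).aestronglyMeasurable
    have h1 : (∫ ω, ∏ j ∈ Finset.cons i s hi, g j ω ∂μ) = integral μ (g i * ∏ j ∈ s, g j) := by
      congr 1; ext ω; rw [Finset.prod_cons]; simp
    rw [h1, key, Finset.prod_cons, ← ih]
    congr 1
    rw [hprodeq]

lemma integral_comp_rademacher {Ω : Type*} [MeasurableSpace Ω] (μ : Measure Ω)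
    [IsProbabilityMeasure μ] {X : Ω → ℝ} (hX : Measurable X)
    (h1 : μ {ω | X ω = 1} = 1/2) (h2 : μ {ω | X ω = -1} = 1/2)
    {h : ℝ → ℝ} : ∫ ω, h (X ω) ∂μ = (h 1 + h (-1)) / 2 := by
  classical
  set A : Set Ω := {ω | X ω = 1} with hA
  set B : Set Ω := {ω | X ω = -1} with hB
  have hAm : MeasurableSet A := hX (measurableSet_singleton 1)
  have hBm : MeasurableSet B := hX (measurableSet_singleton (-1))
  have hdisj : Disjoint A B := by
    rw [Set.disjoint_left]
    intro ω hωA hωB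
    simp only [hA, hB, Set.mem_setOf_eq] at hωA hωB
    rw [hωA] at hωB; norm_num at hωB
  have hunion : μ (A ∪ B) = 1 := by
    rw [measure_union hdisj hBm, h1, h2]
    rw [one_div]; exact ENNReal.inv_two_add_inv_two
  have hcompl : μ (A ∪ B)ᶜ = 0 := by
    rw [measure_compl (hAm.union hBm) (measure_ne_top μ _), hunion, measure_univ, tsub_self]
  have hae : ∀ᵐ ω ∂μ, ω ∈ A ∪ B := by
    rw [MeasureTheory.ae_iff]
    exact hcompl
  have heq : (fun ω => h (X ω)) =ᵐ[μ]
      (A.indicator (fun _ => h 1) + B.indicator (fun _ => h (-1))) := by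
    filter_upwards [hae] with ω hω
    rcases hω with hω | hω
    · have hX1 : X ω = 1 := hω
      have hnB : ω ∉ B := fun hωB => by
        have : X ω = -1 := hωB
        rw [hX1] at this; norm_num at this
      simp [Set.indicator_of_mem hω, Set.indicator_of_notMem hnB, hX1]
    · have hX1 : X ω = -1 := hω
      have hnA : ω ∉ A := fun hωA => by
        have : X ω = 1 := hωA
        rw [hX1] at this; norm_num at this
      simp [Set.indicator_of_mem hω, Set.indicator_of_notMem hnA, hX1]
  rw [integral_congr_ae heq]
  simp only [Pi.add_apply]
  rw [integral_add ((integrable_const (h 1)).indicator hAm)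
      ((integrable_const (h (-1))).indicator hBm)]
  rw [integral_indicator_const _ hAm, integral_indicator_const _ hBm, measureReal_def, measureReal_def, h1, h2]
  simp [ENNReal.toReal_div]
  ring

lemma theta_le (N : ℕ) : ∑ p ∈ (Finset.Icc 1 N).filter Nat.Prime, Real.log p ≤ N * Real.log 4 := by
  classical
  have hset : (Finset.Icc 1 N).filter Nat.Prime = (Finset.range (N+1)).filter Nat.Prime := by
    ext p
    simp only [mem_filter, mem_Icc, mem_range]
    constructor
    · rintro ⟨⟨h1, h2⟩, hp⟩; exact ⟨by omega, hp⟩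
    · rintro ⟨h1, hp⟩; exact ⟨⟨hp.one_lt.le, by omega⟩, hp⟩
  rw [hset]
  have hprim : ((primorial N : ℕ) : ℝ) ≤ (4:ℝ) ^ N := by exact_mod_cast primorial_le_4_pow N
  have hlog : Real.log (primorial N) ≤ N * Real.log 4 := by
    calc Real.log (primorial N) ≤ Real.log ((4:ℝ)^N) :=
          Real.log_le_log (by exact_mod_cast primorial_pos N) hprim
      _ = N * Real.log 4 := by rw [Real.log_pow]
  have hcast : ((primorial N : ℕ) : ℝ) = ∏ p ∈ (Finset.range (N+1)).filter Nat.Prime, (p:ℝ) := by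
    rw [primorial]; push_cast; rfl
  have hlogprod : Real.log (primorial N)
      = ∑ p ∈ (Finset.range (N+1)).filter Nat.Prime, Real.log p := by
    rw [hcast, Real.log_prod]
    intro p hp
    simp only [mem_filter] at hp
    exact_mod_cast hp.2.pos.ne'
  rwa [hlogprod] at hlog

lemma mertens_dyadic : ∀ k : ℕ, ∀ N : ℕ, N < 2^(k+1) →
    ∑ p ∈ (Finset.Icc 1 N).filter Nat.Prime, Real.log p / p
      ≤ (2 * Real.log 4) * (k + 1) := by
  classical
  have hlog4 : 0 ≤ Real.log 4 := Real.log_nonneg (by norm_num)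
  intro k
  induction k with
  | zero =>
    intro N hN
    interval_cases N
    · simp; positivity
    · have : (Finset.Icc 1 1).filter Nat.Prime = ∅ := by decide
      rw [this]; simp; positivity
  | succ k ih =>
    intro N hN
    by_cases hN1 : N ≤ 1
    · have hsub : ∑ p ∈ (Finset.Icc 1 N).filter Nat.Prime, Real.log p / p = 0 := by
        interval_cases N
        · simp
        · have : (Finset.Icc 1 1).filter Nat.Prime = ∅ := by decide
          rw [this]; simp
      rw [hsub]; positivity
    push_neg at hN1
    set M := N / 2 with hM
    have hM1 : 1 ≤ M := Nat.one_le_div_iff (by norm_num) |>.2 hN1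
    have hMN : M ≤ N := Nat.div_le_self N 2
    have hsplit : Finset.Icc 1 N = Finset.Icc 1 M ∪ Finset.Ioc M N := by
      ext a; simp only [mem_Icc, mem_union, mem_Ioc]; omega
    have hdisj : Disjoint ((Finset.Icc 1 M).filter Nat.Prime)
        ((Finset.Ioc M N).filter Nat.Prime) := by
      apply Finset.disjoint_filter_filter
      rw [Finset.disjoint_left]
      intro a ha hb
      simp only [mem_Icc, mem_Ioc] at ha hb
      omega
    have hsum : ∑ p ∈ (Finset.Icc 1 N).filter Nat.Prime, Real.log p / p
        = ∑ p ∈ (Finset.Icc 1 M).filter Nat.Prime, Real.log p / p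
          + ∑ p ∈ (Finset.Ioc M N).filter Nat.Prime, Real.log p / p := by
      rw [hsplit, Finset.filter_union, Finset.sum_union hdisj]
    have htail : ∑ p ∈ (Finset.Ioc M N).filter Nat.Prime, Real.log p / p ≤ 2 * Real.log 4 := by
      have hsub2 : (Finset.Ioc M N).filter Nat.Prime ⊆ (Finset.Icc 1 N).filter Nat.Prime := by
        apply Finset.filter_subset_filter
        intro a ha; simp only [mem_Ioc] at ha; simp only [mem_Icc]; omega
      calc ∑ p ∈ (Finset.Ioc M N).filter Nat.Prime, Real.log p / p
          ≤ ∑ p ∈ (Finset.Ioc M N).filter Nat.Prime, Real.log p / (M+1) := by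
            apply Finset.sum_le_sum
            intro p hp
            simp only [mem_filter, mem_Ioc] at hp
            have hplog : 0 ≤ Real.log p := Real.log_nonneg (by exact_mod_cast hp.2.one_lt.le)
            have hMp : ((M:ℝ)+1) ≤ p := by exact_mod_cast hp.1.1
            apply div_le_div_of_nonneg_left hplog (by positivity) hMp
        _ = (∑ p ∈ (Finset.Ioc M N).filter Nat.Prime, Real.log p) / (M+1) := by
            rw [Finset.sum_div]
        _ ≤ (N * Real.log 4) / (M+1) := by
            gcongr
            calc ∑ p ∈ (Finset.Ioc M N).filter Nat.Prime, Real.log p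
                ≤ ∑ p ∈ (Finset.Icc 1 N).filter Nat.Prime, Real.log p := by
                  apply Finset.sum_le_sum_of_subset_of_nonneg hsub2
                  intro p hp _
                  simp only [mem_filter] at hp
                  exact Real.log_nonneg (by exact_mod_cast hp.2.one_lt.le)
              _ ≤ N * Real.log 4 := theta_le N
        _ ≤ 2 * Real.log 4 := by
            rw [div_le_iff₀ (by positivity)]
            have h2M : (N:ℝ) ≤ 2 * ((M:ℝ)+1) := by
              have : N ≤ 2 * M + 1 := by omega
              have := (Nat.cast_le (α := ℝ)).2 this
              push_cast at this ⊢
              linarith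
            nlinarith
    have hMlt : M < 2^(k+1) := by
      have h2 : N < 2^(k+1+1) := hN
      have : 2^(k+1+1) = 2 * 2^(k+1) := by ring
      omega
    calc ∑ p ∈ (Finset.Icc 1 N).filter Nat.Prime, Real.log p / p
        ≤ (2 * Real.log 4) * (k+1) + 2 * Real.log 4 := by
          rw [hsum]; exact add_le_add (ih M hMlt) htail
      _ = (2 * Real.log 4) * (↑(k+1) + 1) := by push_cast; ring

lemma mertens_bound (N : ℕ) :
    ∑ p ∈ (Finset.Icc 1 N).filter Nat.Prime, Real.log p / p
      ≤ (2 * Real.log 4) * (Nat.log 2 N + 1) := by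
  rcases Nat.eq_zero_or_pos N with h | h
  · subst h
    simp
    positivity
  · exact mertens_dyadic (Nat.log 2 N) N (Nat.lt_pow_succ_log_self (by norm_num) N)

lemma cpow_real_exp (p : ℕ) (hp : 2 ≤ p) (y : ℝ) :
    (p:ℂ) ^ ((y:ℝ) : ℂ) = (((p:ℝ) ^ y : ℝ) : ℂ) := by
  rw [show ((p:ℂ)) = (((p:ℝ):ℂ)) by norm_num, ← Complex.ofReal_cpow (by positivity) y]

lemma factor_decomp (p : ℕ) (hp : 2 ≤ p) (σ t : ℝ) :
    (p:ℂ) ^ (-(1/2 + (σ:ℂ) + (t:ℂ) * Complex.I))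
      = (((p:ℝ) ^ (-(1/2 + σ)) : ℝ) : ℂ) * Complex.exp ((-(t * Real.log p) : ℝ) * Complex.I) := by
  have hp0 : (p:ℂ) ≠ 0 := Nat.cast_ne_zero.2 (by omega)
  have hsplit : -(1/2 + (σ:ℂ) + (t:ℂ) * Complex.I)
      = ((-(1/2 + σ) : ℝ) : ℂ) + ((-t : ℝ) : ℂ) * Complex.I := by
    push_cast; ring
  rw [hsplit, Complex.cpow_add _ _ hp0]
  congr 1
  · rw [← cpow_real_exp p hp]
  · rw [Complex.cpow_def_of_ne_zero hp0]
    have hlog : Complex.log (p:ℂ) = ((Real.log p : ℝ) : ℂ) := by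
      rw [← Complex.ofReal_natCast, Complex.ofReal_log (by positivity)]
    rw [hlog]
    congr 1
    push_cast
    ring

lemma abs_sq_one_add (x a θ : ℝ) :
    (‖1 + (x:ℂ) * ((a:ℝ):ℂ) * Complex.exp ((θ:ℝ) * Complex.I)‖)^2
      = 1 + 2 * x * a * Real.cos θ + x^2 * a^2 := by
  rw [Complex.sq_norm]
  rw [Complex.exp_mul_I]
  have hre : (1 + (x:ℂ) * (a:ℂ) * (Complex.cos θ + Complex.sin θ * Complex.I)).re
      = 1 + x * a * Real.cos θ := by
    simp [Complex.cos_ofReal_re, Complex.sin_ofReal_re]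
  have him : (1 + (x:ℂ) * (a:ℂ) * (Complex.cos θ + Complex.sin θ * Complex.I)).im
      = x * a * Real.sin θ := by
    simp [Complex.cos_ofReal_re, Complex.sin_ofReal_re]
  rw [Complex.normSq_apply, hre, him]
  have hpyth := Real.sin_sq_add_cos_sq θ
  linear_combination x^2 * a^2 * hpyth

set_option maxHeartbeats 1000000 in
lemma per_prime_bound (p : ℕ) (hp : 2 ≤ p) (σ t : ℝ)
    (ha : (p:ℝ) ^ (-(1/2+σ)) ≤ 4/5) :
    ((‖(1 + ((1:ℝ):ℂ) * (p:ℂ) ^ (-(1/2 + (σ:ℂ) + (t:ℂ) * Complex.I))) /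
        (1 + ((1:ℝ):ℂ) * (p:ℂ) ^ (-(1/2 + (σ:ℂ))))‖)^2
     + (‖(1 + ((-1:ℝ):ℂ) * (p:ℂ) ^ (-(1/2 + (σ:ℂ) + (t:ℂ) * Complex.I))) /
        (1 + ((-1:ℝ):ℂ) * (p:ℂ) ^ (-(1/2 + (σ:ℂ))))‖)^2) / 2
      ≤ 1 + 16 * ((p:ℝ) ^ (-(1/2+σ)))^2 * (t * Real.log p)^2 := by
  set a : ℝ := (p:ℝ) ^ (-(1/2+σ)) with hadef
  have ha0 : 0 < a := Real.rpow_pos_of_pos (by positivity) _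
  set θ : ℝ := -(t * Real.log p) with hθdef
  set c : ℝ := Real.cos (t * Real.log p) with hcdef
  have hcθ : Real.cos θ = c := by rw [hθdef, Real.cos_neg]
  have hB : (p:ℂ) ^ (-(1/2 + (σ:ℂ))) = ((a:ℝ):ℂ) := by
    have : -(1/2 + (σ:ℂ)) = ((-(1/2+σ) : ℝ) : ℂ) := by push_cast; ring
    rw [this, cpow_real_exp p hp]
  have hA : (p:ℂ) ^ (-(1/2 + (σ:ℂ) + (t:ℂ) * Complex.I))
      = ((a:ℝ):ℂ) * Complex.exp ((θ:ℝ) * Complex.I) := factor_decomp p hp σ t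
  have habs : ∀ x : ℝ, (‖(1 + ((x:ℝ):ℂ) * (p:ℂ) ^ (-(1/2 + (σ:ℂ) + (t:ℂ) * Complex.I))) /
        (1 + ((x:ℝ):ℂ) * (p:ℂ) ^ (-(1/2 + (σ:ℂ))))‖)^2
      = (1 + 2 * x * a * c + x^2 * a^2) / (1 + x * a)^2 := by
    intro x
    rw [hA, hB, norm_div, div_pow]
    congr 1
    · rw [← mul_assoc, abs_sq_one_add x a θ, hcθ]
    · have : (1 : ℂ) + (x:ℂ) * ((a:ℝ):ℂ) = (((1 + x*a : ℝ)):ℂ) := by push_cast; ring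
      rw [this, Complex.norm_real, Real.norm_eq_abs, sq_abs]
  rw [habs 1, habs (-1)]
  have h1a : (0:ℝ) < 1 + a := by linarith
  have h2a : (0:ℝ) < 1 - a := by linarith
  have hid : ((1 + 2 * 1 * a * c + 1^2 * a^2) / (1 + 1 * a)^2
      + (1 + 2 * (-1) * a * c + (-1)^2 * a^2) / (1 + (-1) * a)^2) / 2
      = 1 + 4 * a^2 * (1 - c) / ((1 - a^2)^2) := by
    have e1 : ((1:ℝ) + 1 * a)^2 = (1+a)^2 := by ring
    have e2 : ((1:ℝ) + (-1) * a)^2 = (1-a)^2 := by ring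
    have e3 : ((1:ℝ) - a^2)^2 = (1+a)^2 * (1-a)^2 := by ring
    rw [e1, e2, e3]
    field_simp
    ring
  rw [hid]
  have h1c : 1 - c ≤ (t * Real.log p)^2 / 2 := by
    have := Real.one_sub_sq_div_two_le_cos (x := t * Real.log p)
    linarith
  have h0c : 0 ≤ 1 - c := by
    have := Real.cos_le_one (t * Real.log p)
    rw [hcdef]; linarith
  have ha2 : a^2 ≤ 16/25 := by nlinarith
  have hu : (9:ℝ)/25 ≤ 1 - a^2 := by linarith
  have hden : (81:ℝ)/625 ≤ (1 - a^2)^2 := by nlinarith [mul_nonneg (by linarith : (0:ℝ) ≤ 1 - a^2 - 9/25) (by linarith : (0:ℝ) ≤ 1 - a^2 + 9/25)]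
  have hnum : 4 * a^2 * (1 - c) ≤ 2 * a^2 * (t * Real.log p)^2 := by nlinarith
  have : 4 * a^2 * (1 - c) / ((1 - a^2)^2) ≤ 2 * a^2 * (t * Real.log p)^2 / (81/625) := by
    apply div_le_div₀ (by positivity) hnum (by norm_num) hden
  have hfinal : 2 * a^2 * (t * Real.log p)^2 / (81/625 : ℝ) ≤ 16 * a^2 * (t * Real.log p)^2 := by
    rw [div_le_iff₀ (by norm_num)]
    nlinarith [mul_nonneg (sq_nonneg a) (sq_nonneg (t * Real.log p))]
  linarith

set_option maxHeartbeats 1000000 in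
/-- With `z = exp(1/|t|)` and `−1/log z ≤ σ ≤ 1/log z`, the mean square of the ratio of
the shifted Euler product to the real-point Euler product over `p ≤ z` is `O(1)`. -/
theorem short_euler_product_ratio_bounded
    {Ω : Type*} [MeasurableSpace Ω] (μ : Measure Ω) [IsProbabilityMeasure μ]
    (f : ℕ → Ω → ℝ) (hf : IsRademacherSystem μ f) :
    ∃ C : ℝ, 0 < C ∧ ∀ t : ℝ, t ≠ 0 → |t| ≤ 1/10 →
      ∀ σ : ℝ, -(1 / Real.log (Real.exp (1 / |t|))) ≤ σ →
        σ ≤ 1 / Real.log (Real.exp (1 / |t|)) →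
      (∫ ω, ∏ p ∈ (Finset.Icc 1 ⌊Real.exp (1 / |t|)⌋₊).filter Nat.Prime,
          (‖(1 + (f p ω : ℂ) *
              (p : ℂ) ^ (-(1 / 2 + (σ : ℂ) + (t : ℂ) * Complex.I))) /
            (1 + (f p ω : ℂ) * (p : ℂ) ^ (-(1 / 2 + (σ : ℂ))))‖) ^ 2 ∂μ) ≤ C := by
  classical
  refine ⟨Real.exp 600, Real.exp_pos _, ?_⟩
  intro t ht htle σ hσ1 hσ2
  rw [Real.log_exp, one_div_one_div] at hσ1 hσ2
  have hT : 0 < |t| := abs_pos.2 ht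
  set N := ⌊Real.exp (1/|t|)⌋₊ with hN
  set s : Finset ℕ := (Finset.Icc 1 N).filter Nat.Prime with hs
  have hz1 : (1:ℝ) ≤ Real.exp (1/|t|) := Real.one_le_exp (by positivity)
  have hNz : (N:ℝ) ≤ Real.exp (1/|t|) := Nat.floor_le (by positivity)
  set h : ℕ → ℝ → ℝ := fun p x =>
    (‖(1 + (x:ℂ) * (p:ℂ) ^ (-(1/2 + (σ:ℂ) + (t:ℂ)*Complex.I))) /
      (1 + (x:ℂ) * (p:ℂ) ^ (-(1/2 + (σ:ℂ))))‖)^2 with hh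
  have hmeas : ∀ p : ℕ, Measurable (h p) := by
    intro p
    apply Measurable.pow_const
    apply continuous_norm.measurable.comp
    apply Measurable.div
    · fun_prop
    · fun_prop
  have hnn : ∀ p x, 0 ≤ h p x := fun p x => sq_nonneg _
  have hind : iIndepFun
      (fun q : {p : ℕ // p.Prime} => (h q.1) ∘ (f q.1)) μ :=
    hf.2.1.comp (fun q : {p:ℕ//p.Prime} => h q.1) (fun q => hmeas q.1)
  have hsfilter : s.filter Nat.Prime = s :=
    Finset.filter_true_of_mem (fun x hx => (Finset.mem_filter.1 hx).2)
  have key : (∫ ω, ∏ q ∈ s.subtype Nat.Prime, h q.1 (f q.1 ω) ∂μ)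
      = ∏ q ∈ s.subtype Nat.Prime, ∫ ω, h q.1 (f q.1 ω) ∂μ :=
    integral_finset_prod_of_iIndep μ hind
      (fun q => (hmeas q.1).comp (hf.1 q.1)) (fun q ω => hnn _ _) _
  have e0 : ∀ (F : ℕ → ℝ), ∏ q ∈ s.subtype Nat.Prime, F q.1 = ∏ p ∈ s, F p := by
    intro F
    rw [Finset.prod_subtype_eq_prod_filter F, hsfilter]
  have hgoalint : (∫ ω, ∏ p ∈ s, h p (f p ω) ∂μ) = ∏ p ∈ s, (h p 1 + h p (-1))/2 := by
    have e1 : ∀ ω, ∏ p ∈ s, h p (f p ω) = ∏ q ∈ s.subtype Nat.Prime, h q.1 (f q.1 ω) := by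
      intro ω
      rw [e0 (fun p => h p (f p ω))]
    calc (∫ ω, ∏ p ∈ s, h p (f p ω) ∂μ)
        = ∫ ω, ∏ q ∈ s.subtype Nat.Prime, h q.1 (f q.1 ω) ∂μ := by simp only [e1]
      _ = ∏ q ∈ s.subtype Nat.Prime, ∫ ω, h q.1 (f q.1 ω) ∂μ := key
      _ = ∏ q ∈ s.subtype Nat.Prime, (h q.1 1 + h q.1 (-1))/2 := by
          apply Finset.prod_congr rfl
          intro q _
          exact integral_comp_rademacher μ (hf.1 q.1)
            (hf.2.2 q.1 q.2).1 (hf.2.2 q.1 q.2).2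
      _ = ∏ p ∈ s, (h p 1 + h p (-1))/2 := e0 (fun p => (h p 1 + h p (-1))/2)
  show (∫ ω, ∏ p ∈ s, h p (f p ω) ∂μ) ≤ Real.exp 600
  rw [hgoalint]
  -- per-prime bound
  have hply : ∀ p ∈ s, (h p 1 + h p (-1))/2
      ≤ Real.exp (120 * t^2 * ((Real.log p)^2 / p)) := by
    intro p hp
    rw [hs, Finset.mem_filter, Finset.mem_Icc] at hp
    obtain ⟨⟨hp1, hpN⟩, hpp⟩ := hp
    have hp2 : 2 ≤ p := hpp.two_le
    have hp0 : (0:ℝ) < p := by positivity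
    have hlogp0 : 0 ≤ Real.log p := Real.log_nonneg (by exact_mod_cast hp1)
    have hlogpz : Real.log p ≤ 1/|t| := by
      calc Real.log p ≤ Real.log (Real.exp (1/|t|)) := by
            apply Real.log_le_log hp0
            calc (p:ℝ) ≤ N := by exact_mod_cast hpN
              _ ≤ _ := hNz
        _ = 1/|t| := Real.log_exp _
    set a : ℝ := (p:ℝ) ^ (-(1/2+σ)) with hadef
    have ha0 : 0 < a := Real.rpow_pos_of_pos hp0 _
    -- a ≤ 4/5
    have hlog2 : (0.6931471803:ℝ) < Real.log 2 := Real.log_two_gt_d9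
    have hlogp2 : Real.log 2 ≤ Real.log p := by
      apply Real.log_le_log (by norm_num)
      exact_mod_cast hp2
    have hexple : Real.log p * (-(1/2+σ)) ≤ -(0.27:ℝ) := by
      have hexp : -(1/2+σ) ≤ -(2/5 : ℝ) := by linarith
      have h1 : Real.log p * (-(1/2+σ)) ≤ Real.log p * (-(2/5)) :=
        mul_le_mul_of_nonneg_left hexp hlogp0
      have h2 : Real.log p * (-(2/5)) ≤ -(0.27:ℝ) := by linarith
      linarith
    have ha : a ≤ 4/5 := by
      rw [hadef, Real.rpow_def_of_pos hp0]
      have h27 : Real.exp (Real.log p * (-(1/2+σ))) ≤ Real.exp (-(0.27:ℝ)) :=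
        Real.exp_le_exp.2 hexple
      have : Real.exp (-(0.27:ℝ)) ≤ 4/5 := by
        rw [Real.exp_neg]
        rw [inv_le_comm₀ (Real.exp_pos _) (by norm_num)]
        calc (4/5 : ℝ)⁻¹ = 1.25 := by norm_num
          _ ≤ 1 + 0.27 := by norm_num
          _ ≤ Real.exp 0.27 := by
              have := Real.add_one_le_exp (0.27:ℝ)
              linarith
      linarith
    have hbound := per_prime_bound p hp2 σ t ha
    -- a^2 ≤ exp 2 / p
    have ha2 : a^2 ≤ Real.exp 2 / p := by
      have hsq : a^2 = Real.exp ((-2*σ)*Real.log p) * Real.exp (-Real.log p) := by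
        rw [hadef, Real.rpow_def_of_pos hp0, sq, ← Real.exp_add, ← Real.exp_add]
        congr 1
        ring
      have hfac1 : Real.exp ((-2*σ)*Real.log p) ≤ Real.exp 2 := by
        apply Real.exp_le_exp.2
        have hstep1 : (-2*σ)*Real.log p ≤ (2*|t|)*Real.log p :=
          mul_le_mul_of_nonneg_right (by linarith) hlogp0
        have hstep2 : (2*|t|)*Real.log p ≤ (2*|t|)*(1/|t|) :=
          mul_le_mul_of_nonneg_left hlogpz (by positivity)
        have hstep3 : (2*|t|)*(1/|t|) = 2 := by field_simp
        linarith
      have hfac2 : Real.exp (-Real.log p) = (p:ℝ)⁻¹ := by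
        rw [Real.exp_neg, Real.exp_log hp0]
      rw [hsq, hfac2]
      rw [div_eq_mul_inv]
      exact mul_le_mul_of_nonneg_right hfac1 (by positivity)
    have hstep : 16 * a^2 * (t * Real.log p)^2 ≤ 120 * t^2 * ((Real.log p)^2 / p) := by
      have he2 : Real.exp 2 ≤ 7.5 := by
        have h1 : Real.exp 1 < 2.7182818286 := Real.exp_one_lt_d9
        have : Real.exp 2 = Real.exp 1 * Real.exp 1 := by
          rw [← Real.exp_add]; norm_num
        nlinarith [Real.exp_pos 1]
      have h1 : 16 * a^2 ≤ 120 / p := by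
        calc 16 * a^2 ≤ 16 * (Real.exp 2 / p) := by
              apply mul_le_mul_of_nonneg_left ha2 (by norm_num)
          _ = (16 * Real.exp 2) / p := by ring
          _ ≤ 120 / p := by
              rw [div_le_div_iff₀ hp0 hp0]
              nlinarith
      calc 16 * a^2 * (t * Real.log p)^2 = (16 * a^2) * (t * Real.log p)^2 := by ring
        _ ≤ (120 / p) * (t * Real.log p)^2 := by
            apply mul_le_mul_of_nonneg_right h1 (sq_nonneg _)
        _ = 120 * t^2 * ((Real.log p)^2 / p) := by
            field_simp
    calc (h p 1 + h p (-1))/2 ≤ 1 + 16 * a^2 * (t * Real.log p)^2 := hbound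
      _ ≤ 1 + 120 * t^2 * ((Real.log p)^2 / p) := by linarith
      _ ≤ Real.exp (120 * t^2 * ((Real.log p)^2 / p)) := by
          have := Real.add_one_le_exp (120 * t^2 * ((Real.log p)^2 / p))
          linarith
  -- sum bound
  have hsum : ∑ p ∈ s, 120 * t^2 * ((Real.log p)^2 / p) ≤ 600 := by
    have hfact : ∑ p ∈ s, 120 * t^2 * ((Real.log p)^2 / p)
        = 120 * t^2 * ∑ p ∈ s, (Real.log p)^2 / p := by
      rw [Finset.mul_sum]
    set S : ℝ := ∑ p ∈ s, Real.log p / p with hS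
    set M : ℝ := ∑ p ∈ s, (Real.log p)^2 / p with hM
    have hterm : ∀ p ∈ s, (Real.log p)^2 / p ≤ (1/|t|) * (Real.log p / p) := by
      intro p hp
      rw [hs, Finset.mem_filter, Finset.mem_Icc] at hp
      obtain ⟨⟨hp1, hpN⟩, hpp⟩ := hp
      have hp0 : (0:ℝ) < p := by positivity
      have hlogp0 : 0 ≤ Real.log p := Real.log_nonneg (by exact_mod_cast hp1)
      have hlogpz : Real.log p ≤ 1/|t| := by
        calc Real.log p ≤ Real.log (Real.exp (1/|t|)) := by
              apply Real.log_le_log hp0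
              calc (p:ℝ) ≤ N := by exact_mod_cast hpN
                _ ≤ _ := hNz
          _ = 1/|t| := Real.log_exp _
      have : (Real.log p)^2 / p = Real.log p * (Real.log p / p) := by ring
      rw [this]
      exact mul_le_mul_of_nonneg_right hlogpz (div_nonneg hlogp0 hp0.le)
    have hS0 : 0 ≤ S := by
      apply Finset.sum_nonneg
      intro p hp
      rw [hs, Finset.mem_filter, Finset.mem_Icc] at hp
      exact div_nonneg (Real.log_nonneg (by exact_mod_cast hp.1.1)) (by positivity)
    have hMS : M ≤ (1/|t|) * S := by
      rw [hS, Finset.mul_sum]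
      exact Finset.sum_le_sum hterm
    have hmert : S ≤ (2 * Real.log 4) * ((Nat.log 2 N : ℝ) + 1) := mertens_bound N
    have hN1 : 1 ≤ N := by
      apply Nat.le_floor
      exact_mod_cast hz1
    have hlogN : Real.log N ≤ 1/|t| := by
      calc Real.log N ≤ Real.log (Real.exp (1/|t|)) := by
            apply Real.log_le_log (by exact_mod_cast hN1) hNz
        _ = 1/|t| := Real.log_exp _
    have hlog2 : (0.6931471803:ℝ) < Real.log 2 := Real.log_two_gt_d9
    have hK : (Nat.log 2 N : ℝ) + 1 ≤ 1.6 / |t| := by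
      have hKl : (Nat.log 2 N : ℝ) ≤ Real.logb 2 N := Real.natLog_le_logb N 2
      have hlb : Real.logb 2 N = Real.log N / Real.log 2 := rfl
      have hlogN0 : 0 ≤ Real.log N := Real.log_nonneg (by exact_mod_cast hN1)
      have h145 : Real.log N / Real.log 2 ≤ 1.45 * (1/|t|) := by
        rw [div_le_iff₀ (by linarith)]
        nlinarith [hT]
      have h015 : (1:ℝ) ≤ 0.15 * (1/|t|) := by
        rw [show (0.15:ℝ) * (1/|t|) = 0.15/|t| by ring, le_div_iff₀ hT]
        linarith
      have hsplit : (1.6:ℝ)/|t| = 1.45 * (1/|t|) + 0.15 * (1/|t|) := by ring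
      rw [hlb] at hKl
      linarith
    have hlog4 : Real.log 4 < 1.39 := by
      have h4 : (4:ℝ) = 2^2 := by norm_num
      rw [h4, Real.log_pow]
      have := Real.log_two_lt_d9
      push_cast
      linarith
    have hlog40 : 0 ≤ Real.log 4 := Real.log_nonneg (by norm_num)
    have hc3 : S ≤ 4.448 / |t| := by
      calc S ≤ (2 * Real.log 4) * ((Nat.log 2 N : ℝ) + 1) := hmert
        _ ≤ (2 * Real.log 4) * (1.6 / |t|) :=
            mul_le_mul_of_nonneg_left hK (by linarith)
        _ ≤ (2 * 1.39) * (1.6 / |t|) := by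
            apply mul_le_mul_of_nonneg_right (by linarith) (by positivity)
        _ = 4.448 / |t| := by ring
    have hc4 : M ≤ (1/|t|) * (4.448/|t|) := by
      calc M ≤ (1/|t|) * S := hMS
        _ ≤ (1/|t|) * (4.448/|t|) :=
            mul_le_mul_of_nonneg_left hc3 (by positivity)
    have habs2 : |t| * |t| = t^2 := by rw [← sq_abs]; ring
    have hc5 : (1/|t|) * (4.448/|t|) = 4.448 / t^2 := by
      rw [div_mul_div_comm, one_mul, habs2]
    have ht2 : (0:ℝ) < t^2 := by positivity
    rw [hfact]
    calc 120 * t^2 * M ≤ 120 * t^2 * (4.448 / t^2) := by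
          apply mul_le_mul_of_nonneg_left _ (by positivity)
          rw [← hc5]; exact hc4
      _ = 533.76 := by field_simp; ring
      _ ≤ 600 := by norm_num
  calc ∏ p ∈ s, (h p 1 + h p (-1))/2
      ≤ ∏ p ∈ s, Real.exp (120 * t^2 * ((Real.log p)^2 / p)) := by
        apply Finset.prod_le_prod
        · intro p _
          have := hnn p 1
          have := hnn p (-1)
          positivity
        · exact hply
    _ = Real.exp (∑ p ∈ s, 120 * t^2 * ((Real.log p)^2 / p)) := by
        rw [Real.exp_sum]
    _ ≤ Real.exp 600 := Real.exp_le_exp.2 hsum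
end
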